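/- The probability measure σ_γ with Σ-transform Σ_{σ_γ}(z) = exp(−γz) has mean 1, pseudo-variance function 𝕍_{σ_γ}(m) = γm²/ln(m) − m², and variance function V_{σ_γ}(m) = γ m(m−1)/ln(m) + m(1−m) on its domain of means contained in (0,1). -/

import Mathlib

open MeasureTheory Set Filter Topology ENNReal

noncomputable section

/-- Cauchy-Stieltjes moment-type transform `M_ν(θ) = ∫ 1/(1-θx) dν(x)`. -/
def Mcs (ν : Measure ℝ) (θ : ℝ) : ℝ := ∫ x, 1 / (1 - θ * x) ∂ν

/-- The mean map `k_ν(θ) = (M_ν(θ) - 1)/(θ M_ν(θ))`. -/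
def kcs (ν : Measure ℝ) (θ : ℝ) : ℝ := (Mcs ν θ - 1) / (θ * Mcs ν θ)

/-- The Cauchy transform `G_ν(z) = ∫ 1/(z-x) dν(x)`. -/
def Gcs (ν : Measure ℝ) (z : ℝ) : ℝ := ∫ x, 1 / (z - x) ∂ν

/-- `Ψ_ν(z) = ∫ zx/(1-zx) dν(x)`. -/
def PsiT (ν : Measure ℝ) (z : ℝ) : ℝ := ∫ x, z * x / (1 - z * x) ∂ν

/-- Topological support of a measure on ℝ. -/
def msupp (ν : Measure ℝ) : Set ℝ := {x | ∀ U ∈ 𝓝 x, ν U ≠ 0}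

/-- The natural parameter domain `(θ₋, θ₊) \ {0}`: nonzero `θ` with `θ x < 1` on the support. -/
def ΘDom (ν : Measure ℝ) : Set ℝ := {θ | θ ≠ 0 ∧ ∀ x ∈ msupp ν, θ * x < 1}

/-- Right-sided parameter domain `(0, θ₊)`. -/
def ΘPlus (ν : Measure ℝ) : Set ℝ := {θ | 0 < θ ∧ ∀ x ∈ msupp ν, θ * x < 1}

/-- `ψ_ν`, the inverse of the mean map `k_ν` on the parameter domain. -/
def ψcs (ν : Measure ℝ) : ℝ → ℝ := Function.invFunOn (kcs ν) (ΘDom ν)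

/-- `ψ_ν` for the right-sided family. -/
def ψplus (ν : Measure ℝ) : ℝ → ℝ := Function.invFunOn (kcs ν) (ΘPlus ν)

/-- `ψ_ν` for the left-sided family (measures on `[0,∞)`, parameter `θ < 0`). -/
def ψminus (ν : Measure ℝ) : ℝ → ℝ := Function.invFunOn (kcs ν) (Iio 0)

/-- The pseudo-variance function `𝕍_ν(m) = m (1/ψ_ν(m) - m)`. -/
def pseudoVar (ν : Measure ℝ) (m : ℝ) : ℝ := m * (1 / ψcs ν m - m)

def pseudoVarMinus (ν : Measure ℝ) (m : ℝ) : ℝ := m * (1 / ψminus ν m - m)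

/-- The tilted measure `P_{θ,ν}(dx) = ν(dx)/(M_ν(θ)(1-θx))`. -/
def tilt (ν : Measure ℝ) (θ : ℝ) : Measure ℝ :=
  ν.withDensity (fun x => ENNReal.ofReal (1 / (Mcs ν θ * (1 - θ * x))))

/-- `Q_{m,ν}`, the element of the CSK family with mean `m`. -/
def Qcsk (ν : Measure ℝ) (m : ℝ) : Measure ℝ := tilt ν (ψcs ν m)

def QcskMinus (ν : Measure ℝ) (m : ℝ) : Measure ℝ := tilt ν (ψminus ν m)

/-- The variance function `V_ν(m) = ∫ (x-m)² dQ_{m,ν}(x)`. -/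
def varFun (ν : Measure ℝ) (m : ℝ) : ℝ := ∫ x, (x - m) ^ 2 ∂(Qcsk ν m)

def varFunMinus (ν : Measure ℝ) (m : ℝ) : ℝ := ∫ x, (x - m) ^ 2 ∂(QcskMinus ν m)

/-- Domain of means (two-sided). -/
def meanDom (ν : Measure ℝ) : Set ℝ := kcs ν '' ΘDom ν

/-- Right-sided domain of means `(m₀(ν), m₊(ν))`. -/
def meanDomPlus (ν : Measure ℝ) : Set ℝ := kcs ν '' ΘPlus ν

/-- Left-sided domain of means `(m₋(ν), m₀(ν))`. -/
def meanDomMinus (ν : Measure ℝ) : Set ℝ := kcs ν '' Iio 0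

/-- `χ_ν`, the inverse of `Ψ_ν` on negative reals. -/
def χT (ν : Measure ℝ) : ℝ → ℝ := Function.invFunOn (PsiT ν) (Iio 0)

/-- The S-transform `S_ν(z) = χ_ν(z)(1+z)/z`. -/
def Stransf (ν : Measure ℝ) (z : ℝ) : ℝ := χT ν z * (1 + z) / z

/-- `m₋(ν) = -1/G_ν(0)` for a measure on `[0,∞)`. -/
def mMinus (ν : Measure ℝ) : ℝ := -(Gcs ν 0)⁻¹

/-- The self-energy (K-transform) `K_ν(z) = z - 1/G_ν(z)`. -/
def KT (ν : Measure ℝ) (z : ℝ) : ℝ := z - 1 / Gcs ν z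

/-- A measure is non-degenerate if it is not a Dirac mass. -/
def Nondeg (ν : Measure ℝ) : Prop := ∀ c : ℝ, ν ≠ Measure.dirac c
def pseudoVarPlus (ν : Measure ℝ) (m : ℝ) : ℝ := m * (1 / ψplus ν m - m)

def QcskPlus (ν : Measure ℝ) (m : ℝ) : Measure ℝ := tilt ν (ψplus ν m)

def varFunPlus (ν : Measure ℝ) (m : ℝ) : ℝ := ∫ x, (x - m) ^ 2 ∂(QcskPlus ν m)

/-- The mean of a measure on `[0,∞)`, as an extended nonnegative real. -/
def m0E (ν : Measure ℝ) : ℝ≥0∞ := ∫⁻ x, ENNReal.ofReal x ∂ν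

/-- The Σ-transform `Σ_ν(z) = S_ν(z/(1-z))`. -/
def SigmaT (ν : Measure ℝ) (z : ℝ) : ℝ := Stransf ν (z / (1 - z))

/-- The free Poisson (Marchenko–Pastur) law with density `(1/2π)√((4-x)/x)` on `(0,4)`. -/
def freePoisson : Measure ℝ :=
  volume.withDensity (fun x => ENNReal.ofReal
    (Set.indicator (Ioo 0 4) (fun y => (1/(2*Real.pi)) * Real.sqrt ((4 - y)/y)) x))


namespace SGAux
set_option linter.unusedSectionVars false
variable {σ : Measure ℝ} [IsProbabilityMeasure σ]

lemma ae_nn (hpos : σ (Iio 0) = 0) : ∀ᵐ x ∂σ, 0 ≤ x := by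
  rw [ae_iff]
  have h : {x : ℝ | ¬ 0 ≤ x} = Iio 0 := by ext x; simp [not_le]
  rw [h]; exact hpos

lemma meas_inv (θ : ℝ) : Measurable fun x : ℝ => 1 / (1 - θ * x) :=
  measurable_const.div (measurable_const.sub (measurable_const.mul measurable_id))

lemma int_inv (hpos : σ (Iio 0) = 0) {θ : ℝ} (hθ : θ < 0) :
    Integrable (fun x => 1 / (1 - θ * x)) σ := by
  refine Integrable.mono' (integrable_const 1) (meas_inv θ).aestronglyMeasurable ?_
  filter_upwards [ae_nn hpos] with x hx
  have h1 : (1:ℝ) ≤ 1 - θ * x := by nlinarith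
  rw [Real.norm_eq_abs, abs_of_nonneg (by positivity)]
  rw [div_le_one (by linarith)]; linarith

lemma int_xdiv (hpos : σ (Iio 0) = 0) {θ : ℝ} (hθ : θ < 0) :
    Integrable (fun x => x / (1 - θ * x)) σ := by
  refine Integrable.mono' (integrable_const (-1/θ))
    (measurable_id.div (measurable_const.sub (measurable_const.mul measurable_id))).aestronglyMeasurable ?_
  filter_upwards [ae_nn hpos] with x hx
  have h1 : (1:ℝ) ≤ 1 - θ * x := by nlinarith
  have hb0 : (0:ℝ) < -1/θ := by rw [neg_div]; simp only [neg_pos]; exact one_div_neg.mpr hθ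
  have hbθ : -1/θ * θ = -1 := by field_simp; rw [div_self (ne_of_lt hθ)]
  rw [Real.norm_eq_abs, abs_of_nonneg (by positivity)]
  rw [div_le_iff₀ (by linarith)]
  nlinarith [hbθ, hb0, hx]

lemma ioi_ne (hpos : σ (Iio 0) = 0) (hatom : σ {0} < 1) : σ (Ioi 0) ≠ 0 := by
  intro h
  have h1 : σ ({0}ᶜ : Set ℝ) = 0 := by
    have he : ({0}ᶜ : Set ℝ) = Iio 0 ∪ Ioi 0 := by
      ext x; simp [lt_or_lt_iff_ne, eq_comm]
    rw [he]
    exact le_antisymm (le_trans (measure_union_le _ _) (by rw [hpos, h]; simp)) zero_le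
  have h2 := measure_add_measure_compl (μ := σ) (measurableSet_singleton (0:ℝ))
  rw [h1, measure_univ, add_zero] at h2
  exact absurd (h2 ▸ hatom) (lt_irrefl 1)

lemma int_pos (hpos : σ (Iio 0) = 0) (hatom : σ {0} < 1) {f : ℝ → ℝ}
    (hf : Integrable f σ) (h0 : ∀ᵐ x ∂σ, 0 ≤ f x) (hpt : ∀ x, 0 < x → 0 < f x) :
    0 < ∫ x, f x ∂σ := by
  rcases (integral_nonneg_of_ae h0).eq_or_lt with h | h
  · exfalso
    have hz := (integral_eq_zero_iff_of_nonneg_ae h0 hf).mp h.symm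
    have hz' : σ {x | ¬ f x = 0} = 0 := hz
    have hsub : Ioi (0:ℝ) ⊆ {x | ¬ f x = 0} := fun x hx => (hpt x hx).ne'
    exact ioi_ne hpos hatom (measure_mono_null hsub hz')
  · exact h

lemma int_one (σ : Measure ℝ) [IsProbabilityMeasure σ] : ∫ (_ : ℝ), (1:ℝ) ∂σ = 1 := by
  simp

lemma Mcs_lt_one (hpos : σ (Iio 0) = 0) (hatom : σ {0} < 1) {θ : ℝ} (hθ : θ < 0) :
    Mcs σ θ < 1 := by
  have key : 0 < ∫ x, (1 - 1 / (1 - θ * x)) ∂σ := by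
    refine int_pos hpos hatom ((integrable_const 1).sub (int_inv hpos hθ)) ?_ ?_
    · filter_upwards [ae_nn hpos] with x hx
      have h1 : (1:ℝ) ≤ 1 - θ * x := by nlinarith
      have : 1 / (1 - θ * x) ≤ 1 := by rw [div_le_one (by linarith)]; linarith
      linarith
    · intro x hx
      have h1 : (1:ℝ) < 1 - θ * x := by nlinarith
      have : 1 / (1 - θ * x) < 1 := by rw [div_lt_one (by linarith)]; linarith
      linarith
  rw [integral_sub (integrable_const 1) (int_inv hpos hθ), int_one] at key
  have : Mcs σ θ = ∫ x, 1 / (1 - θ * x) ∂σ := rfl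
  linarith [this ▸ key]

lemma Mcs_gt (hpos : σ (Iio 0) = 0) (hatom : σ {0} < 1) {θ : ℝ} (hθ : θ < 0) :
    (σ {0}).toReal < Mcs σ θ := by
  have hind : Integrable (fun x => Set.indicator {0} (fun _ => (1:ℝ)) x) σ :=
    (integrable_const 1).indicator (measurableSet_singleton 0)
  have key : 0 < ∫ x, (1 / (1 - θ * x) - Set.indicator {0} (fun _ => (1:ℝ)) x) ∂σ := by
    refine int_pos hpos hatom ((int_inv hpos hθ).sub hind) ?_ ?_
    · filter_upwards [ae_nn hpos] with x hx
      rcases hx.eq_or_lt with h | h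
      · simp [← h]
      · have h1 : (0:ℝ) < 1 - θ * x := by nlinarith
        have h2 : Set.indicator {0} (fun _ => (1:ℝ)) x = 0 :=
          Set.indicator_of_notMem (by simpa using h.ne') _
        rw [h2, sub_zero]; positivity
    · intro x hx
      have h1 : (0:ℝ) < 1 - θ * x := by nlinarith
      have h2 : Set.indicator {0} (fun _ => (1:ℝ)) x = 0 :=
        Set.indicator_of_notMem (by simpa using hx.ne') _
      rw [h2, sub_zero]; positivity
  rw [integral_sub (int_inv hpos hθ) hind, integral_indicator_const _ (measurableSet_singleton 0)] at key
  have : Mcs σ θ = ∫ x, 1 / (1 - θ * x) ∂σ := rfl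
  rw [← this] at key
  simp at key
  exact key

lemma Mcs_pos (hpos : σ (Iio 0) = 0) (hatom : σ {0} < 1) {θ : ℝ} (hθ : θ < 0) :
    0 < Mcs σ θ :=
  lt_of_le_of_lt ENNReal.toReal_nonneg (Mcs_gt hpos hatom hθ)

lemma PsiT_eq (hpos : σ (Iio 0) = 0) {θ : ℝ} (hθ : θ < 0) :
    PsiT σ θ = Mcs σ θ - 1 := by
  have hcg : ∀ᵐ x ∂σ, θ * x / (1 - θ * x) = 1 / (1 - θ * x) - 1 := by
    filter_upwards [ae_nn hpos] with x hx
    have h1 : (1:ℝ) ≤ 1 - θ * x := by nlinarith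
    field_simp
    ring
  have : PsiT σ θ = ∫ x, (1 / (1 - θ * x) - 1) ∂σ := integral_congr_ae hcg
  rw [this, integral_sub (int_inv hpos hθ) (integrable_const 1), int_one]
  rfl

lemma xdiv_eq (hpos : σ (Iio 0) = 0) {θ : ℝ} (hθ : θ < 0) :
    ∫ x, x / (1 - θ * x) ∂σ = (Mcs σ θ - 1) / θ := by
  have h1 : ∫ x, θ * (x / (1 - θ * x)) ∂σ = Mcs σ θ - 1 := by
    have : ∀ x : ℝ, θ * (x / (1 - θ * x)) = θ * x / (1 - θ * x) := fun x => (mul_div_assoc _ _ _).symm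
    rw [show (fun x : ℝ => θ * (x / (1 - θ * x))) = fun x => θ * x / (1 - θ * x) from funext this]
    rw [← PsiT_eq hpos hθ]; rfl
  rw [integral_const_mul] at h1
  rw [eq_div_iff (ne_of_lt hθ), mul_comm]
  exact h1

lemma int_mul_xdiv (hpos : σ (Iio 0) = 0) {θ : ℝ} (hθ : θ < 0) (c : ℝ) :
    Integrable (fun x => c * x / (1 - θ * x)) σ := by
  have := (int_xdiv hpos hθ).const_mul c
  refine this.congr (Filter.Eventually.of_forall fun x => ?_)
  exact (mul_div_assoc _ _ _).symm

lemma psi_mono (hpos : σ (Iio 0) = 0) (hatom : σ {0} < 1) :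
    StrictMonoOn (PsiT σ) (Iio 0) := by
  intro a ha b hb hab
  simp only [mem_Iio] at ha hb
  have key : 0 < ∫ x, (b * x / (1 - b * x) - a * x / (1 - a * x)) ∂σ := by
    refine int_pos hpos hatom ((int_mul_xdiv hpos hb b).sub (int_mul_xdiv hpos ha a)) ?_ ?_
    · filter_upwards [ae_nn hpos] with x hx
      have h1 : (0:ℝ) < 1 - b * x := by nlinarith
      have h2 : (0:ℝ) < 1 - a * x := by nlinarith
      rw [sub_nonneg, div_le_div_iff₀ h2 h1]
      nlinarith [mul_nonneg (by linarith : (0:ℝ) ≤ b - a) hx]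
    · intro x hx
      have h1 : (0:ℝ) < 1 - b * x := by nlinarith
      have h2 : (0:ℝ) < 1 - a * x := by nlinarith
      rw [sub_pos, div_lt_div_iff₀ h2 h1]
      nlinarith [mul_pos (by linarith : (0:ℝ) < b - a) hx]
  rw [integral_sub (int_mul_xdiv hpos hb b) (int_mul_xdiv hpos ha a)] at key
  have ha' : PsiT σ a = ∫ x, a * x / (1 - a * x) ∂σ := rfl
  have hb' : PsiT σ b = ∫ x, b * x / (1 - b * x) ∂σ := rfl
  rw [ha', hb']; linarith



lemma kcs_eq {γ : ℝ} (hγ : 0 < γ) (hpos : σ (Iio 0) = 0) (hatom : σ {0} < 1)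
    (hSig : ∀ z : ℝ, z / (1 - z) ∈ Ioo ((σ {0}).toReal - 1) (0:ℝ) →
      SigmaT σ z = Real.exp (-γ * z))
    {θ : ℝ} (hθ : θ < 0) :
    kcs σ θ = Real.exp (γ * ((Mcs σ θ - 1) / Mcs σ θ)) := by
  set M := Mcs σ θ with hM
  have hM1 : M < 1 := Mcs_lt_one hpos hatom hθ
  have hMg : (σ {0}).toReal < M := Mcs_gt hpos hatom hθ
  have hM0 : 0 < M := Mcs_pos hpos hatom hθ
  have hPsi : PsiT σ θ = M - 1 := PsiT_eq hpos hθ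
  have hchi : χT σ (M - 1) = θ := by
    have h1 : Function.invFunOn (PsiT σ) (Iio 0) (PsiT σ θ) = θ :=
      (psi_mono hpos hatom).injOn.leftInvOn_invFunOn (mem_Iio.mpr hθ)
    rw [hPsi] at h1
    exact h1
  set z := (M - 1) / M with hz
  have hzz : z / (1 - z) = M - 1 := by
    rw [hz]
    have h1 : 1 - (M - 1) / M = 1 / M := by field_simp; ring
    rw [h1]
    field_simp
  have hmem : z / (1 - z) ∈ Ioo ((σ {0}).toReal - 1) (0:ℝ) := by
    rw [hzz]; constructor <;> [linarith; linarith]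
  have hS := hSig z hmem
  rw [SigmaT, hzz, Stransf, hchi] at hS
  -- hS : θ * (1 + (M - 1)) / (M - 1) = Real.exp (-γ * z)
  have hMne : M - 1 ≠ 0 := by linarith
  have hθM : θ * M ≠ 0 := mul_ne_zero (ne_of_lt hθ) (ne_of_gt hM0)
  have hS' : θ * M / (M - 1) = Real.exp (-γ * z) := by
    rw [← hS]; ring_nf
  have hkey : (M - 1) / (θ * M) = Real.exp (γ * z) := by
    have hE : Real.exp (-γ * z) ≠ 0 := Real.exp_ne_zero _
    have h2 : θ * M = Real.exp (-(γ * z)) * (M - 1) := by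
      field_simp at hS'
      linarith
    have hE2 : Real.exp (γ * z) ≠ 0 := Real.exp_ne_zero _
    rw [h2, Real.exp_neg]
    field_simp
  show (Mcs σ θ - 1) / (θ * Mcs σ θ) = Real.exp (γ * ((Mcs σ θ - 1) / Mcs σ θ))
  rw [← hM]
  exact hkey

lemma tendsto_theta : Tendsto (fun n : ℕ => -(1:ℝ)/(n+1)) atTop (𝓝 0) := by
  have h := tendsto_one_div_add_atTop_nhds_zero_nat (𝕜 := ℝ)
  have h2 : Tendsto (fun n : ℕ => -(1 / (n + 1 : ℝ))) atTop (𝓝 (-0)) := h.neg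
  rw [neg_zero] at h2
  refine h2.congr fun n => by ring

lemma theta_neg (n : ℕ) : -(1:ℝ)/(n+1) < 0 := by
  have : (0:ℝ) < n + 1 := by positivity
  rw [neg_div]
  simp only [neg_neg, Left.neg_neg_iff]
  positivity

lemma mean_one {γ : ℝ} (hγ : 0 < γ) (hpos : σ (Iio 0) = 0) (hatom : σ {0} < 1)
    (hSig : ∀ z : ℝ, z / (1 - z) ∈ Ioo ((σ {0}).toReal - 1) (0:ℝ) →
      SigmaT σ z = Real.exp (-γ * z)) :
    Integrable (fun x : ℝ => x) σ ∧ ∫ x, x ∂σ = 1 := by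
  set θn : ℕ → ℝ := fun n => -(1:ℝ)/(n+1) with hθn
  have hneg : ∀ n, θn n < 0 := theta_neg
  have hθn0 : Tendsto θn atTop (𝓝 0) := tendsto_theta
  -- M n → 1
  have hMt : Tendsto (fun n => Mcs σ (θn n)) atTop (𝓝 1) := by
    have h := tendsto_integral_of_dominated_convergence (μ := σ)
      (F := fun n x => 1 / (1 - θn n * x)) (f := fun _ => (1:ℝ)) (bound := fun _ => 1)
      (fun n => (meas_inv (θn n)).aestronglyMeasurable) (integrable_const 1)
      (fun n => by
        filter_upwards [ae_nn hpos] with x hx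
        have h1 : (1:ℝ) ≤ 1 - θn n * x := by nlinarith [hneg n]
        rw [Real.norm_eq_abs, abs_of_nonneg (by positivity)]
        rw [div_le_one (by linarith)]; linarith)
      (by
        refine Filter.Eventually.of_forall fun x => ?_
        have hden : Tendsto (fun n => 1 - θn n * x) atTop (𝓝 1) := by
          have := (hθn0.mul_const x).const_sub 1
          simpa using this
        have := (tendsto_const_nhds (x := (1:ℝ))).div hden one_ne_zero
        rw [show (1:ℝ)/1 = 1 from by norm_num] at this
        exact this)
    have h1 : ∫ x, (1:ℝ) ∂σ = 1 := int_one σ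
    rw [h1] at h
    exact h
  -- m n → 1
  have hkt : Tendsto (fun n => kcs σ (θn n)) atTop (𝓝 1) := by
    have harg : Tendsto (fun n => γ * ((Mcs σ (θn n) - 1) / Mcs σ (θn n))) atTop (𝓝 0) := by
      have h1 : Tendsto (fun n => (Mcs σ (θn n) - 1) / Mcs σ (θn n)) atTop (𝓝 ((1-1)/1)) :=
        (hMt.sub_const 1).div hMt one_ne_zero
      have h2 := h1.const_mul γ
      simpa using h2
    have h3 := (Real.continuous_exp.tendsto 0).comp harg
    rw [Real.exp_zero] at h3
    refine h3.congr fun n => ?_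
    exact (kcs_eq hγ hpos hatom hSig (hneg n)).symm
  -- I n → 1
  have hIt : Tendsto (fun n => ∫ x, x / (1 - θn n * x) ∂σ) atTop (𝓝 1) := by
    have h1 : Tendsto (fun n => kcs σ (θn n) * Mcs σ (θn n)) atTop (𝓝 (1*1)) := hkt.mul hMt
    rw [mul_one] at h1
    refine h1.congr fun n => ?_
    rw [xdiv_eq hpos (hneg n)]
    have hM0 : Mcs σ (θn n) ≠ 0 := (Mcs_pos hpos hatom (hneg n)).ne'
    show kcs σ (θn n) * Mcs σ (θn n) = _
    rw [kcs]
    field_simp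
  -- MCT
  have hlim : ∫⁻ x, ENNReal.ofReal x ∂σ = 1 := by
    have hmct : Tendsto (fun n => ∫⁻ x, ENNReal.ofReal (x / (1 - θn n * x)) ∂σ) atTop
        (𝓝 (∫⁻ x, ENNReal.ofReal x ∂σ)) := by
      refine lintegral_tendsto_of_tendsto_of_monotone
        (fun n => ((measurable_id.div (measurable_const.sub
          (measurable_const.mul measurable_id))).ennreal_ofReal).aemeasurable) ?_ ?_
      · filter_upwards [ae_nn hpos] with x hx
        intro i j hij
        apply ENNReal.ofReal_le_ofReal
        have hi : (0:ℝ) < 1 - θn i * x := by nlinarith [hneg i]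
        have hj : (0:ℝ) < 1 - θn j * x := by nlinarith [hneg j]
        have hmono : θn i ≤ θn j := by
          rw [hθn]
          simp only [neg_div]
          apply neg_le_neg
          apply one_div_le_one_div_of_le (by positivity)
          exact_mod_cast Nat.add_le_add_right hij 1
        rw [div_le_div_iff₀ hi hj]
        nlinarith [mul_nonneg (sub_nonneg.mpr hmono) hx]
      · filter_upwards [ae_nn hpos] with x hx
        have hden : Tendsto (fun n => 1 - θn n * x) atTop (𝓝 1) := by
          have := (hθn0.mul_const x).const_sub 1
          simpa using this
        have hh : Tendsto (fun n => x / (1 - θn n * x)) atTop (𝓝 x) := by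
          have := (tendsto_const_nhds (x := x)).div hden one_ne_zero
          rwa [div_one] at this
        exact (ENNReal.continuous_ofReal.tendsto x).comp hh
    have heq : ∀ n, ∫⁻ x, ENNReal.ofReal (x / (1 - θn n * x)) ∂σ
        = ENNReal.ofReal (∫ x, x / (1 - θn n * x) ∂σ) := by
      intro n
      rw [← ofReal_integral_eq_lintegral_ofReal (int_xdiv hpos (hneg n))]
      filter_upwards [ae_nn hpos] with x hx
      have h1 : (0:ℝ) < 1 - θn n * x := by nlinarith [hneg n]
      positivity
    rw [show (fun n => ∫⁻ x, ENNReal.ofReal (x / (1 - θn n * x)) ∂σ)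
        = fun n => ENNReal.ofReal (∫ x, x / (1 - θn n * x) ∂σ) from funext heq] at hmct
    have h2 : Tendsto (fun n => ENNReal.ofReal (∫ x, x / (1 - θn n * x) ∂σ)) atTop
        (𝓝 (ENNReal.ofReal 1)) := (ENNReal.continuous_ofReal.tendsto 1).comp hIt
    have := tendsto_nhds_unique hmct h2
    rw [this, ENNReal.ofReal_one]
  have hint : Integrable (fun x : ℝ => x) σ := by
    refine ⟨measurable_id.aestronglyMeasurable, ?_⟩
    rw [hasFiniteIntegral_iff_norm]
    have hcg : ∫⁻ x, ENNReal.ofReal ‖x‖ ∂σ = ∫⁻ x, ENNReal.ofReal x ∂σ := by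
      apply lintegral_congr_ae
      filter_upwards [ae_nn hpos] with x hx
      rw [Real.norm_eq_abs, abs_of_nonneg hx]
    rw [hcg, hlim]
    exact one_lt_top
  refine ⟨hint, ?_⟩
  rw [integral_eq_lintegral_of_nonneg_ae (ae_nn hpos) measurable_id.aestronglyMeasurable]
  rw [hlim]
  rfl

lemma main_m {γ : ℝ} (hγ : 0 < γ) (hpos : σ (Iio 0) = 0) (hatom : σ {0} < 1)
    (hSig : ∀ z : ℝ, z / (1 - z) ∈ Ioo ((σ {0}).toReal - 1) (0:ℝ) →
      SigmaT σ z = Real.exp (-γ * z))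
    {m : ℝ} (hm : m ∈ meanDomMinus σ) :
    0 < m ∧ m < 1 ∧
    pseudoVarMinus σ m = γ * m ^ 2 / Real.log m - m ^ 2 ∧
    varFunMinus σ m = γ * m * (m - 1) / Real.log m + m * (1 - m) := by
  obtain ⟨θ₀, hθ₀, hk0⟩ := hm
  have hex : ∃ a ∈ Iio 0, kcs σ a = m := ⟨θ₀, hθ₀, hk0⟩
  set θ := ψminus σ m with hθdef
  have hθmem : θ ∈ Iio 0 := Function.invFunOn_mem hex
  have hθ : θ < 0 := mem_Iio.mp hθmem
  have hθne : θ ≠ 0 := ne_of_lt hθ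
  have hkm : kcs σ θ = m := Function.invFunOn_eq hex
  set M := Mcs σ θ with hMdef
  have hM1 : M < 1 := Mcs_lt_one hpos hatom hθ
  have hM0 : 0 < M := Mcs_pos hpos hatom hθ
  have hMne0 : M ≠ 0 := ne_of_gt hM0
  have hθM : θ * M ≠ 0 := mul_ne_zero hθne hMne0
  have hme : m = Real.exp (γ * ((M - 1) / M)) := by
    rw [← hkm]; exact kcs_eq hγ hpos hatom hSig hθ
  have hm0 : 0 < m := hme ▸ Real.exp_pos _
  have hargneg : γ * ((M - 1) / M) < 0 :=
    mul_neg_of_pos_of_neg hγ (div_neg_of_neg_of_pos (by linarith) hM0)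
  have hm1 : m < 1 := by rw [hme]; exact Real.exp_lt_one_iff.mpr hargneg
  have hlog : Real.log m = γ * ((M - 1) / M) := by rw [hme, Real.log_exp]
  have hlogne : Real.log m ≠ 0 := by rw [hlog]; exact ne_of_lt hargneg
  have hMeq : M - 1 = m * (θ * M) := by
    have h : (M - 1) / (θ * M) = m := by rw [← hkm]; rfl
    exact (div_eq_iff hθM).mp h
  have h1θ : 1 / θ = γ * m / Real.log m := by
    rw [hlog, eq_div_iff (ne_of_lt hargneg)]
    field_simp
    linear_combination hMeq
  refine ⟨hm0, hm1, ?_, ?_⟩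
  · have hpv : pseudoVarMinus σ m = m * (1 / θ - m) := rfl
    rw [hpv, h1θ]
    field_simp
  · -- variance
    have hmean := mean_one hγ hpos hatom hSig
    set d : ℝ → ℝ := fun x => 1 / (M * (1 - θ * x)) with hd
    have hdmeas : Measurable d :=
      measurable_const.div (measurable_const.mul
        (measurable_const.sub (measurable_const.mul measurable_id)))
    have hQ : QcskMinus σ m
        = σ.withDensity (fun x => ((Real.toNNReal (d x) : NNReal) : ℝ≥0∞)) := rfl
    set c : ℝ := (1 / θ - m) / M with hc
    have hint1 : varFunMinus σ m = ∫ x, ((d x).toNNReal : NNReal) • ((x - m) ^ 2) ∂σ := by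
      show (∫ x, (x - m) ^ 2 ∂(QcskMinus σ m)) = _
      rw [hQ, integral_withDensity_eq_integral_smul hdmeas.real_toNNReal _]
    have hcong : ∀ᵐ x ∂σ, ((d x).toNNReal : NNReal) • ((x - m) ^ 2)
        = (-(1 / (θ * M))) * (x - m) + c * (x / (1 - θ * x)) + (-(c * m)) * (1 / (1 - θ * x)) := by
      filter_upwards [ae_nn hpos] with x hx
      have h1 : (1:ℝ) ≤ 1 - θ * x := by nlinarith
      have hden : (1 - θ * x) ≠ 0 := by linarith
      have hd0 : 0 ≤ d x := by rw [hd]; positivity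
      rw [NNReal.smul_def, Real.coe_toNNReal _ hd0, hd, hc]
      have hMd : M * (1 - θ * x) ≠ 0 := mul_ne_zero hMne0 hden
      beta_reduce
      rw [smul_eq_mul]
      field_simp
      ring
    have hi1 : Integrable (fun x : ℝ => (-(1 / (θ * M))) * (x - m)) σ :=
      ((hmean.1.sub (integrable_const m)).const_mul _)
    have hi2 : Integrable (fun x : ℝ => c * (x / (1 - θ * x))) σ :=
      ((int_xdiv hpos hθ).const_mul _)
    have hi3 : Integrable (fun x : ℝ => (-(c * m)) * (1 / (1 - θ * x))) σ :=
      ((int_inv hpos hθ).const_mul _)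
    have hi12 : Integrable (fun x : ℝ => (-(1 / (θ * M))) * (x - m) + c * (x / (1 - θ * x))) σ :=
      hi1.add hi2
    rw [hint1, integral_congr_ae hcong, integral_add hi12 hi3,
      integral_add hi1 hi2, integral_const_mul, integral_const_mul, integral_const_mul,
      integral_sub hmean.1 (integrable_const m), hmean.2, integral_const]
    have hxd : ∫ x, x / (1 - θ * x) ∂σ = (M - 1) / θ := xdiv_eq hpos hθ
    have hMint : ∫ x, 1 / (1 - θ * x) ∂σ = M := rfl
    rw [hxd, hMint]
    simp only [probReal_univ, smul_eq_mul, one_mul]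
    -- goal: -(1/(θ*M)) * (1 - m) + c * ((M-1)/θ) + -(c*m) * M = γ*m*(m-1)/log m + m*(1-m)
    have hA : (M - 1) / θ = m * M := by
      rw [hMeq]; field_simp
    have hB : 1 / (θ * M) = 1 / θ - m := by
      field_simp
      linear_combination (-1 : ℝ) * hMeq
    have hval : -(1 / (θ * M)) * (1 - m) + c * ((M - 1) / θ) + -(c * m) * M
        = (m - 1) * (1 / θ - m) := by
      rw [hA, hB]; ring
    rw [hval, h1θ]
    field_simp
    ring

end SGAux

/-- the measure `σ_γ` with `Σ_{σ_γ}(z) = exp(-γz)` has mean 1,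
pseudo-variance function `γm²/ln m - m²` and variance function
`γm(m-1)/ln m + m(1-m)`, on a domain of means contained in `(0,1)`. -/
theorem sigma_gamma_varFun (γ : ℝ) (hγ : 0 < γ)
    (σ : Measure ℝ) [IsProbabilityMeasure σ]
    (hnd : Nondeg σ) (hpos : σ (Iio 0) = 0) (hatom : σ {0} < 1)
    (hSig : ∀ z : ℝ, z / (1 - z) ∈ Ioo ((σ {0}).toReal - 1) (0:ℝ) →
      SigmaT σ z = Real.exp (-γ * z)) :
    (∫ x, x ∂σ) = 1 ∧ meanDomMinus σ ⊆ Ioo 0 1 ∧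
    ∀ m ∈ meanDomMinus σ,
      pseudoVarMinus σ m = γ * m ^ 2 / Real.log m - m ^ 2 ∧
      varFunMinus σ m = γ * m * (m - 1) / Real.log m + m * (1 - m) := by
  refine ⟨(SGAux.mean_one hγ hpos hatom hSig).2, ?_, ?_⟩
  · intro m hm
    obtain ⟨h0, h1, _, _⟩ := SGAux.main_m hγ hpos hatom hSig hm
    exact ⟨h0, h1⟩
  · intro m hm
    obtain ⟨_, _, h2, h3⟩ := SGAux.main_m hγ hpos hatom hSig hm
    exact ⟨h2, h3⟩
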